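/- arXiv:1601.08152 — 3 statements merged into one kernel-verified Lean document; each statement's English description precedes it below -/
import Mathlib

section
/- Let V be a finite-dimensional real inner product space and II : V × V → W a symmetric bilinear map into an inner product space W such that ⟨II(X,X), II(X,X)⟩ = 4 for every unit vector X ∈ V. Then for every pair of orthonormal vectors X, Y ∈ V one has ⟨II(X,X), II(Y,Y)⟩ + 2‖II(X,Y)‖² = 4. -/
open scoped RealInnerProductSpace

/-- Polarization identity for a symmetric bilinear second fundamental form
with `⟨II(X,X),II(X,X)⟩ = 4` on unit vectors. -/
theorem stmt3 {V W : Type*} [NormedAddCommGroup V] [InnerProductSpace ℝ V]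
    [FiniteDimensional ℝ V] [NormedAddCommGroup W] [InnerProductSpace ℝ W]
    (II : V →ₗ[ℝ] V →ₗ[ℝ] W) (hsymm : ∀ x y : V, II x y = II y x)
    (hnorm : ∀ x : V, ‖x‖ = 1 → ⟪II x x, II x x⟫ = (4 : ℝ))
    (X Y : V) (hX : ‖X‖ = 1) (hY : ‖Y‖ = 1) (hXY : ⟪X, Y⟫ = 0) :
    ⟪II X X, II Y Y⟫ + 2 * ‖II X Y‖ ^ 2 = 4 := by
  have hs2 : Real.sqrt 2 * Real.sqrt 2 = 2 := Real.mul_self_sqrt (by norm_num)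
  have hs2pos : (0:ℝ) < Real.sqrt 2 := Real.sqrt_pos.mpr (by norm_num)
  have hinv2 : (Real.sqrt 2)⁻¹ * (Real.sqrt 2)⁻¹ = 2⁻¹ := by
    rw [← mul_inv, hs2]
  have key : ∀ v : V, II ((Real.sqrt 2)⁻¹ • v) ((Real.sqrt 2)⁻¹ • v)
      = (2:ℝ)⁻¹ • II v v := by
    intro v
    rw [map_smul, LinearMap.map_smul₂, smul_smul, hinv2]
  have hu : ∀ v : V, ‖v‖ ^ 2 = 2 → ‖(Real.sqrt 2)⁻¹ • v‖ = 1 := by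
    intro v hv
    have hnv : ‖v‖ = Real.sqrt 2 := by
      have h0 : (0:ℝ) ≤ ‖v‖ := norm_nonneg v
      nlinarith [hs2, hs2pos]
    rw [norm_smul, Real.norm_eq_abs, abs_inv, abs_of_pos hs2pos, hnv,
      inv_mul_cancel₀ hs2pos.ne']
  have hu1 := hu (X + Y) (by rw [norm_add_sq_real, hX, hY, hXY]; ring)
  have hu2 := hu (X - Y) (by rw [norm_sub_sq_real, hX, hY, hXY]; ring)
  have h1 := hnorm _ hu1
  have h2 := hnorm _ hu2
  rw [key] at h1
  rw [key] at h2
  have hPX := hnorm X hX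
  have hPY := hnorm Y hY
  have hsym := hsymm X Y
  have hR : ‖II X Y‖ ^ 2 = ⟪II X Y, II X Y⟫ := (real_inner_self_eq_norm_sq _).symm
  simp only [map_add, map_sub, LinearMap.add_apply, LinearMap.sub_apply,
    real_inner_smul_left, real_inner_smul_right,
    inner_add_left, inner_add_right, inner_sub_left, inner_sub_right, hsym] at h1 h2
  have hc : ⟪II Y Y, II X X⟫ = ⟪II X X, II Y Y⟫ := real_inner_comm _ _
  have hc2 : ⟪II Y X, II X X⟫ = ⟪II X X, II Y X⟫ := real_inner_comm _ _
  have hc3 : ⟪II Y Y, II Y X⟫ = ⟪II Y X, II Y Y⟫ := real_inner_comm _ _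
  rw [hR, hsym]
  linarith [h1, h2, hPX, hPY, hc, hc2, hc3]
end

section
/- Let S be a self-adjoint endomorphism of an (n+1)-dimensional real inner product space with eigenvalues 0 < k₁ ≤ ⋯ ≤ k_{n+1}. Suppose k_{n+1}/k₁ < √((n+1)/2). Then for every orthonormal basis {e₁,…,eₙ,N} and every unit vector X orthogonal to N, one has 2(‖S(X)‖² − ⟨S(X),N⟩²) + 2(‖S(N)‖² − ⟨S(N),N⟩²) < (⟨S(X),X⟩ + ⟨S(N),N⟩)·Σₖ⟨S(eₖ),eₖ⟩. -/
open scoped RealInnerProductSpace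

/-- Pointwise algebraic inequality for a pinched positive self-adjoint shape
operator `S` with eigenvalues `0 < k₁ ≤ ⋯ ≤ k_{n+1}` satisfying
`k_{n+1}/k₁ < √((n+1)/2)`. -/
theorem stmt5 {E : Type*} [NormedAddCommGroup E] [InnerProductSpace ℝ E]
    (n : ℕ) (hdim : Module.finrank ℝ E = n + 1)
    (S : E →ₗ[ℝ] E) (hsa : ∀ x y : E, ⟪S x, y⟫ = ⟪x, S y⟫)
    (v : OrthonormalBasis (Fin (n + 1)) ℝ E) (k : Fin (n + 1) → ℝ)
    (hmono : Monotone k) (hpos : 0 < k 0)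
    (heig : ∀ i, S (v i) = k i • v i)
    (hpinch : k (Fin.last n) / k 0 < Real.sqrt ((n + 1) / 2))
    (b : OrthonormalBasis (Fin (n + 1)) ℝ E)
    (X : E) (hX : ‖X‖ = 1) (hXN : ⟪X, b (Fin.last n)⟫ = 0) :
    2 * (‖S X‖ ^ 2 - ⟪S X, b (Fin.last n)⟫ ^ 2) +
      2 * (‖S (b (Fin.last n))‖ ^ 2 - ⟪S (b (Fin.last n)), b (Fin.last n)⟫ ^ 2) <
    (⟪S X, X⟫ + ⟪S (b (Fin.last n)), b (Fin.last n)⟫) *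
      ∑ i : Fin n, ⟪S (b i.castSucc), b i.castSucc⟫ := by
  set k0 := k 0 with hk0
  set km := k (Fin.last n) with hkm
  have hk0m : k0 ≤ km := hmono (Fin.zero_le _)
  have hki : ∀ i, k0 ≤ k i := fun i => hmono (Fin.zero_le _)
  have hkim : ∀ i, k i ≤ km := fun i => hmono (Fin.le_last _)
  -- inner product via coordinates in v
  have hinner : ∀ x y : E, ⟪x, y⟫ = ∑ i, v.repr x i * v.repr y i := by
    intro x y
    rw [← v.repr.inner_map_map x y, PiLp.inner_apply]
    simp [RCLike.inner_apply]
    exact Finset.sum_congr rfl fun i _ => mul_comm _ _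
  have hrepr : ∀ (x : E) (i), v.repr (S x) i = k i * v.repr x i := by
    intro x i
    rw [v.repr_apply_apply, v.repr_apply_apply, real_inner_comm, hsa, heig,
      real_inner_smul_right, real_inner_comm]
  -- quadratic forms in coordinates
  have hSxx : ∀ x : E, ⟪S x, x⟫ = ∑ i, k i * (v.repr x i) ^ 2 := by
    intro x
    rw [hinner]
    exact Finset.sum_congr rfl fun i _ => by rw [hrepr]; ring
  have hSxSx : ∀ x : E, ‖S x‖ ^ 2 = ∑ i, k i ^ 2 * (v.repr x i) ^ 2 := by
    intro x
    rw [← real_inner_self_eq_norm_sq, hinner]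
    exact Finset.sum_congr rfl fun i _ => by rw [hrepr]; ring
  have hnorm : ∀ x : E, ‖x‖ ^ 2 = ∑ i, (v.repr x i) ^ 2 := by
    intro x
    rw [← real_inner_self_eq_norm_sq, hinner]
    exact Finset.sum_congr rfl fun i _ => by ring
  -- bounds for any unit vector
  have hbound : ∀ x : E, ‖x‖ = 1 →
      k0 ≤ ⟪S x, x⟫ ∧ ⟪S x, x⟫ ≤ km ∧ ‖S x‖ ^ 2 ≤ km * ⟪S x, x⟫ := by
    intro x hx
    have hsum : ∑ i, (v.repr x i) ^ 2 = 1 := by rw [← hnorm, hx]; norm_num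
    refine ⟨?_, ?_, ?_⟩
    · have : 0 ≤ ∑ i, (k i - k0) * (v.repr x i) ^ 2 :=
        Finset.sum_nonneg fun i _ => mul_nonneg (sub_nonneg.2 (hki i)) (sq_nonneg _)
      have h2 : ∑ i, (k i - k0) * (v.repr x i) ^ 2
          = ⟪S x, x⟫ - k0 := by
        rw [hSxx]
        simp [sub_mul, Finset.sum_sub_distrib, ← Finset.mul_sum, hsum]
      linarith [h2 ▸ this]
    · have : 0 ≤ ∑ i, (km - k i) * (v.repr x i) ^ 2 :=
        Finset.sum_nonneg fun i _ => mul_nonneg (sub_nonneg.2 (hkim i)) (sq_nonneg _)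
      have h2 : ∑ i, (km - k i) * (v.repr x i) ^ 2 = km - ⟪S x, x⟫ := by
        rw [hSxx]
        simp [sub_mul, Finset.sum_sub_distrib, ← Finset.mul_sum, hsum]
      linarith [h2 ▸ this]
    · rw [hSxSx, hSxx, Finset.mul_sum]
      refine Finset.sum_le_sum fun i _ => ?_
      have : k i ^ 2 ≤ km * k i := by nlinarith [hki i, hkim i, hpos]
      nlinarith [sq_nonneg (v.repr x i), this]
  set N := b (Fin.last n) with hN
  have hNunit : ‖N‖ = 1 := b.orthonormal.1 _
  obtain ⟨ha1, ha2, hSX⟩ := hbound X hX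
  obtain ⟨hc1, hc2, hSN⟩ := hbound N hNunit
  -- trace computation
  have hParseval : ∀ j, ∑ i, (v.repr (b i) j) ^ 2 = 1 := by
    intro j
    have : ∀ i, v.repr (b i) j = b.repr (v j) i := by
      intro i
      rw [v.repr_apply_apply, b.repr_apply_apply, real_inner_comm]
    simp_rw [this]
    have := hnorm (v j)
    have hvb : ∀ x : E, ‖x‖ ^ 2 = ∑ i, (b.repr x i) ^ 2 := by
      intro x
      rw [← real_inner_self_eq_norm_sq, ← b.repr.inner_map_map x x, PiLp.inner_apply]
      simp [RCLike.inner_apply, sq]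
    rw [← hvb (v j), v.orthonormal.1 j]
    norm_num
  have htrace : ∑ i, ⟪S (b i), b i⟫ = ∑ j, k j := by
    have : ∑ i, ⟪S (b i), b i⟫ = ∑ i, ∑ j, k j * (v.repr (b i) j) ^ 2 := by
      exact Finset.sum_congr rfl fun i _ => hSxx (b i)
    rw [this, Finset.sum_comm]
    exact Finset.sum_congr rfl fun j _ => by rw [← Finset.mul_sum, hParseval, mul_one]
  have hsplit : ∑ j : Fin (n+1), ⟪S (b j), b j⟫
      = (∑ i : Fin n, ⟪S (b i.castSucc), b i.castSucc⟫) + ⟪S N, N⟫ := by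
    rw [Fin.sum_univ_castSucc]
  have hT : (n : ℝ) * k0 + km ≤ ∑ j, k j := by
    rw [Fin.sum_univ_castSucc]
    have : (n : ℝ) * k0 ≤ ∑ i : Fin n, k i.castSucc := by
      calc (n : ℝ) * k0 = ∑ _i : Fin n, k0 := by
            simp [Finset.sum_const, mul_comm]
        _ ≤ ∑ i : Fin n, k i.castSucc := Finset.sum_le_sum fun i _ => hki _
    linarith
  -- pinching
  have hpinch2 : 2 * km ^ 2 < ((n : ℝ) + 1) * k0 ^ 2 := by
    have h1 : km < Real.sqrt (((n : ℝ) + 1) / 2) * k0 := by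
      rw [div_lt_iff₀ hpos] at hpinch
      exact_mod_cast hpinch
    have h2 : km ^ 2 < (((n : ℝ) + 1) / 2) * k0 ^ 2 := by
      have hkmpos : 0 < km := lt_of_lt_of_le hpos hk0m
      have hs : Real.sqrt (((n:ℝ)+1)/2) ^ 2 = ((n:ℝ)+1)/2 :=
        Real.sq_sqrt (by positivity)
      calc km ^ 2 < (Real.sqrt (((n:ℝ)+1)/2) * k0) ^ 2 := by
            apply pow_lt_pow_left₀ h1 hkmpos.le (by norm_num)
        _ = (((n:ℝ)+1)/2) * k0 ^ 2 := by rw [mul_pow, hs]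
      
    linarith
  have hTsum : (n : ℝ) * k0 + km ≤ ∑ i, ⟪S (b i), b i⟫ := htrace ▸ hT
  rw [hsplit] at hTsum
  nlinarith [sq_nonneg (⟪S X, N⟫ : ℝ), sq_nonneg (⟪S N, N⟫ - k0),
    sq_nonneg (km - ⟪S N, N⟫),
    mul_nonneg (sub_nonneg.2 ha2) (sub_nonneg.2 hc1),
    mul_nonneg (sub_nonneg.2 ha1) (sub_nonneg.2 hc1),
    mul_nonneg (sub_nonneg.2 ha2) (sub_nonneg.2 hc2),
    mul_nonneg (sub_nonneg.2 hc1) (sub_nonneg.2 hc2),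
    mul_nonneg (mul_nonneg (Nat.cast_nonneg n : (0:ℝ) ≤ n) hpos.le) (sub_nonneg.2 hc1),
    mul_nonneg (mul_nonneg (Nat.cast_nonneg n : (0:ℝ) ≤ n) hpos.le) (sub_nonneg.2 ha1),
    mul_nonneg (Nat.cast_nonneg n : (0:ℝ) ≤ n) (mul_nonneg hpos.le hpos.le),
    mul_pos hpos hpos, hSX, hSN, hTsum, hpinch2]
end

section
/- Let S be a self-adjoint positive-definite endomorphism of an (n+1)-dimensional real inner product space with smallest eigenvalue k₁ and largest eigenvalue k_{n+1}. Then for every unit vector X and every unit vector N orthogonal to X: ‖S(X)‖² − ⟨S(X),N⟩² ≤ k_{n+1}², ‖S(N)‖² − ⟨S(N),N⟩² ≤ k_{n+1}² − k₁², and (⟨S(X),X⟩ + ⟨S(N),N⟩)·tr(S) ≥ 2(n+1)k₁². -/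
open scoped RealInnerProductSpace

/-- Three eigenvalue estimates for a self-adjoint positive-definite operator `S`
with smallest eigenvalue `k₁ = k 0` and largest eigenvalue `k_{n+1} = k (Fin.last n)`. -/
theorem stmt6 {E : Type*} [NormedAddCommGroup E] [InnerProductSpace ℝ E]
    [FiniteDimensional ℝ E]
    (n : ℕ) (hdim : Module.finrank ℝ E = n + 1)
    (S : E →ₗ[ℝ] E) (hsa : ∀ x y : E, ⟪S x, y⟫ = ⟪x, S y⟫)
    (v : OrthonormalBasis (Fin (n + 1)) ℝ E) (k : Fin (n + 1) → ℝ)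
    (hmono : Monotone k) (hpos : 0 < k 0)
    (heig : ∀ i, S (v i) = k i • v i)
    (X N : E) (hX : ‖X‖ = 1) (hN : ‖N‖ = 1) (hXN : ⟪X, N⟫ = 0) :
    ‖S X‖ ^ 2 - ⟪S X, N⟫ ^ 2 ≤ k (Fin.last n) ^ 2 ∧
    ‖S N‖ ^ 2 - ⟪S N, N⟫ ^ 2 ≤ k (Fin.last n) ^ 2 - k 0 ^ 2 ∧
    (⟪S X, X⟫ + ⟪S N, N⟫) * LinearMap.trace ℝ E S ≥ 2 * (n + 1) * k 0 ^ 2 := by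
  have hkpos : ∀ i, 0 < k i := fun i => lt_of_lt_of_le hpos (hmono (Fin.zero_le i))
  have hkle : ∀ i, k i ≤ k (Fin.last n) := fun i => hmono (Fin.le_last i)
  have hk0le : ∀ i, k 0 ≤ k i := fun i => hmono (Fin.zero_le i)
  have hSv : ∀ (Y : E) i, ⟪S Y, v i⟫ = k i * ⟪Y, v i⟫ := by
    intro Y i
    rw [hsa, heig, real_inner_smul_right]
  have hinner : ∀ Y Z : E, ∑ i, ⟪Y, v i⟫ * ⟪Z, v i⟫ = ⟪Y, Z⟫ := by
    intro Y Z
    rw [← v.sum_inner_mul_inner Y Z]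
    exact Finset.sum_congr rfl fun i _ => by rw [real_inner_comm (v i) Z]
  -- basic sums
  have hfsum : ∑ i, ⟪X, v i⟫ ^ 2 = 1 := by
    have := hinner X X
    rw [real_inner_self_eq_norm_sq, hX] at this
    simpa [sq] using this
  have hgsum : ∑ i, ⟪N, v i⟫ ^ 2 = 1 := by
    have := hinner N N
    rw [real_inner_self_eq_norm_sq, hN] at this
    simpa [sq] using this
  -- expansions
  have hnormSq : ∀ Y : E, ‖S Y‖ ^ 2 = ∑ i, (k i * ⟪Y, v i⟫) ^ 2 := by
    intro Y
    have := hinner (S Y) (S Y)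
    rw [real_inner_self_eq_norm_sq] at this
    rw [← this]
    exact Finset.sum_congr rfl fun i _ => by rw [hSv, sq]
  have hSinner : ∀ Y Z : E, ⟪S Y, Z⟫ = ∑ i, k i * (⟪Y, v i⟫ * ⟪Z, v i⟫) := by
    intro Y Z
    rw [← hinner (S Y) Z]
    exact Finset.sum_congr rfl fun i _ => by rw [hSv, mul_assoc]
  -- trace
  have htr : LinearMap.trace ℝ E S = ∑ i, k i := by
    rw [LinearMap.trace_eq_matrix_trace ℝ v.toBasis, Matrix.trace]
    refine Finset.sum_congr rfl fun i _ => ?_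
    simp [Matrix.diag, LinearMap.toMatrix_apply, heig]
  -- part 1
  have h1 : ‖S X‖ ^ 2 - ⟪S X, N⟫ ^ 2 ≤ k (Fin.last n) ^ 2 := by
    have hle : ‖S X‖ ^ 2 ≤ k (Fin.last n) ^ 2 := by
      rw [hnormSq]
      calc ∑ i, (k i * ⟪X, v i⟫) ^ 2 ≤ ∑ i, k (Fin.last n) ^ 2 * ⟪X, v i⟫ ^ 2 := by
            refine Finset.sum_le_sum fun i _ => ?_
            rw [mul_pow]
            have : k i ^ 2 ≤ k (Fin.last n) ^ 2 :=
              pow_le_pow_left₀ (hkpos i).le (hkle i) 2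
            nlinarith [sq_nonneg (⟪X, v i⟫ : ℝ)]
        _ = k (Fin.last n) ^ 2 := by rw [← Finset.mul_sum, hfsum, mul_one]
    nlinarith [sq_nonneg (⟪S X, N⟫ : ℝ)]
  -- part 2
  have hSNN : k 0 ≤ ⟪S N, N⟫ := by
    rw [hSinner]
    calc k 0 = ∑ i, k 0 * ⟪N, v i⟫ ^ 2 := by rw [← Finset.mul_sum, hgsum, mul_one]
      _ ≤ ∑ i, k i * (⟪N, v i⟫ * ⟪N, v i⟫) := by
          refine Finset.sum_le_sum fun i _ => ?_
          rw [← sq]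
          exact mul_le_mul_of_nonneg_right (hk0le i) (sq_nonneg _)
  have h2 : ‖S N‖ ^ 2 - ⟪S N, N⟫ ^ 2 ≤ k (Fin.last n) ^ 2 - k 0 ^ 2 := by
    have hle : ‖S N‖ ^ 2 ≤ k (Fin.last n) ^ 2 := by
      rw [hnormSq]
      calc ∑ i, (k i * ⟪N, v i⟫) ^ 2 ≤ ∑ i, k (Fin.last n) ^ 2 * ⟪N, v i⟫ ^ 2 := by
            refine Finset.sum_le_sum fun i _ => ?_
            rw [mul_pow]
            have : k i ^ 2 ≤ k (Fin.last n) ^ 2 :=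
              pow_le_pow_left₀ (hkpos i).le (hkle i) 2
            nlinarith [sq_nonneg (⟪N, v i⟫ : ℝ)]
        _ = k (Fin.last n) ^ 2 := by rw [← Finset.mul_sum, hgsum, mul_one]
    have : k 0 ^ 2 ≤ ⟪S N, N⟫ ^ 2 := pow_le_pow_left₀ hpos.le hSNN 2
    linarith
  -- part 3
  have hSXX : k 0 ≤ ⟪S X, X⟫ := by
    rw [hSinner]
    calc k 0 = ∑ i, k 0 * ⟪X, v i⟫ ^ 2 := by rw [← Finset.mul_sum, hfsum, mul_one]
      _ ≤ ∑ i, k i * (⟪X, v i⟫ * ⟪X, v i⟫) := by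
          refine Finset.sum_le_sum fun i _ => ?_
          rw [← sq]
          exact mul_le_mul_of_nonneg_right (hk0le i) (sq_nonneg _)
  have htrge : ((n : ℝ) + 1) * k 0 ≤ LinearMap.trace ℝ E S := by
    rw [htr]
    calc ((n : ℝ) + 1) * k 0 = ∑ _i : Fin (n+1), k 0 := by
          simp [Finset.sum_const, mul_comm]
      _ ≤ ∑ i, k i := Finset.sum_le_sum fun i _ => hk0le i
  refine ⟨h1, h2, ?_⟩
  have h2k : 2 * k 0 ≤ ⟪S X, X⟫ + ⟪S N, N⟫ := by linarith
  have hnn : (0:ℝ) ≤ ((n : ℝ) + 1) * k 0 := by positivity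
  nlinarith [mul_le_mul h2k htrge hnn (by linarith [hSXX, hSNN, hpos] : (0:ℝ) ≤ ⟪S X, X⟫ + ⟪S N, N⟫)]
end
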